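/- Let A ∈ ℝ^{n×n} be symmetric positive semidefinite such that A_{ij} < 0 for all i ≠ j. Then rank(A) ≥ n − 1. -/

import Mathlib

open Matrix

lemma aux_abs_ker (n : ℕ) (A : Matrix (Fin n) (Fin n) ℝ) (hA : A.PosSemidef)
    (hneg : ∀ i j, i ≠ j → A i j < 0) (x : Fin n → ℝ) (hx : A *ᵥ x = 0) :
    A *ᵥ (fun i => |x i|) = 0 := by
  set y : Fin n → ℝ := fun i => |x i| with hy
  have hq : star y ⬝ᵥ A *ᵥ y ≤ star x ⬝ᵥ A *ᵥ x := by
    simp only [star_trivial, dotProduct, mulVec, dotProduct, Finset.mul_sum]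
    refine Finset.sum_le_sum fun i _ => Finset.sum_le_sum fun j _ => ?_
    rcases eq_or_ne i j with rfl | hij
    · simp only [hy]
      have : |x i| * (A i i * |x i|) = x i * (A i i * x i) := by
        rw [show |x i| * (A i i * |x i|) = A i i * |x i| ^ 2 by ring, sq_abs]; ring
      exact this.le
    · have h1 : x i * x j ≤ |x i| * |x j| := by
        calc x i * x j ≤ |x i * x j| := le_abs_self _
        _ = |x i| * |x j| := abs_mul _ _
      have h2 := hneg i j hij
      simp only [hy]
      nlinarith
  rw [hx, dotProduct_zero] at hq
  exact (hA.dotProduct_mulVec_zero_iff y).mp (le_antisymm hq (hA.dotProduct_mulVec_nonneg y))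

lemma aux_all_ne (n : ℕ) (A : Matrix (Fin n) (Fin n) ℝ) (hA : A.PosSemidef)
    (hneg : ∀ i j, i ≠ j → A i j < 0) (x : Fin n → ℝ) (hx : A *ᵥ x = 0)
    (hx0 : x ≠ 0) : ∀ i, x i ≠ 0 := by
  obtain ⟨k, hk⟩ : ∃ k, x k ≠ 0 := Function.ne_iff.mp hx0
  have habs := aux_abs_ker n A hA hneg x hx
  intro i
  rcases eq_or_ne i k with rfl | hik
  · exact hk
  · have hi := congrFun habs i
    simp only [mulVec, dotProduct, Pi.zero_apply] at hi
    rw [← Finset.add_sum_erase _ _ (Finset.mem_univ i)] at hi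
    have hpos : ∑ j ∈ Finset.univ.erase i, A i j * |x j| < 0 := by
      have hk' : k ∈ Finset.univ.erase i :=
        Finset.mem_erase.mpr ⟨fun h => hik h.symm, Finset.mem_univ k⟩
      have : ∑ j ∈ Finset.univ.erase i, A i j * |x j| <
          ∑ _j ∈ Finset.univ.erase i, (0 : ℝ) := by
        refine Finset.sum_lt_sum (fun j hj => ?_) ⟨k, hk', ?_⟩
        · have hji : j ≠ i := (Finset.mem_erase.mp hj).1
          have := hneg i j (fun h => hji h.symm)
          nlinarith [abs_nonneg (x j)]
        · have := hneg i k (fun h => hik h)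
          have : A i k * |x k| < 0 :=
            mul_neg_of_neg_of_pos this (abs_pos.mpr hk)
          linarith
      simpa using this
    intro hxi
    rw [hxi] at hi
    simp only [abs_zero, mul_zero, zero_add] at hi
    linarith

theorem stmt16 (n : ℕ) (A : Matrix (Fin n) (Fin n) ℝ) (hA : A.PosSemidef)
    (hneg : ∀ i j, i ≠ j → A i j < 0) :
    n - 1 ≤ A.rank := by
  rcases Nat.eq_zero_or_pos n with rfl | hn
  · simp
  have i0 : Fin n := ⟨0, hn⟩
  -- the kernel of mulVecLin has dimension ≤ 1
  have hker : Module.finrank ℝ (LinearMap.ker A.mulVecLin) ≤ 1 := by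
    rcases eq_or_ne (LinearMap.ker A.mulVecLin) ⊥ with hb | hb
    · rw [hb]; simp
    · obtain ⟨x, hxmem, hx0⟩ := Submodule.exists_mem_ne_zero_of_ne_bot hb
      have hx : A *ᵥ x = 0 := hxmem
      have hspan : LinearMap.ker A.mulVecLin ≤ Submodule.span ℝ {x} := by
        intro y hy
        have hyk : A *ᵥ y = 0 := hy
        set c := y i0 / x i0 with hc
        have hz : A *ᵥ (y - c • x) = 0 := by
          rw [mulVec_sub, mulVec_smul, hx, hyk, smul_zero, sub_zero]
        have hz0 : y - c • x = 0 := by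
          by_contra h
          have := aux_all_ne n A hA hneg _ hz h i0
          apply this
          simp only [Pi.sub_apply, Pi.smul_apply, smul_eq_mul, hc]
          field_simp [aux_all_ne n A hA hneg x hx hx0 i0]
          ring
        have : y = c • x := by
          have := sub_eq_zero.mp hz0; exact this
        rw [this]
        exact Submodule.smul_mem _ _ (Submodule.mem_span_singleton_self x)
      calc Module.finrank ℝ (LinearMap.ker A.mulVecLin)
          ≤ Module.finrank ℝ (Submodule.span ℝ {x}) := Submodule.finrank_mono hspan
        _ = 1 := finrank_span_singleton hx0
  have hrn : A.rank + Module.finrank ℝ (LinearMap.ker A.mulVecLin) = n := by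
    have := LinearMap.finrank_range_add_finrank_ker A.mulVecLin
    simpa [Matrix.rank, Module.finrank_pi] using this
  omega
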